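/- Let $0 < C < \beta$, let $M_0, N \ge 0$, let $T \ge 0$, and let $V : \mathbb{R} \to \mathbb{R}$ be differentiable on $[t_0, t_0 + T]$ with $V'(t) \le -C\,V(t) + M_0 e^{-\beta t} + N$ for all $t \in [t_0, t_0 + T]$. Then for all $t \in [t_0, t_0 + T]$: $V(t) \le \left[V(t_0) + M_0 e^{-\beta t_0}\,T - \frac{N}{C}\right]e^{-C(t - t_0)} + \frac{N}{C}$. -/

import Mathlib

/-- Equation (28) (Condition 3, `C < β`): when the Lyapunov decay rate `C` is smaller
than the trigger design parameter `β` and the turn-on duration is bounded by `T`,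
the Lyapunov function lies beneath an exponentially converging function whose initial
value is inflated by `M₀ e^{-β t₀} T`. -/
theorem lyapunov_bound_slow_decay (C β M0 N T t0 : ℝ) (hC : 0 < C) (hCβ : C < β)
    (hM0 : 0 ≤ M0) (hN : 0 ≤ N) (hT : 0 ≤ T) (V V' : ℝ → ℝ)
    (hderiv : ∀ t ∈ Set.Icc t0 (t0 + T), HasDerivWithinAt V (V' t) (Set.Icc t0 (t0 + T)) t)
    (hineq : ∀ t ∈ Set.Icc t0 (t0 + T), V' t ≤ -C * V t + M0 * Real.exp (-β * t) + N) :
    ∀ t ∈ Set.Icc t0 (t0 + T),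
      V t ≤ (V t0 + M0 * Real.exp (-β * t0) * T - N / C) * Real.exp (-C * (t - t0))
        + N / C := by
  set F : ℝ → ℝ := fun t => V t * Real.exp (C * (t - t0))
    - M0 * Real.exp (-β * t0) * (t - t0) - (N / C) * Real.exp (C * (t - t0)) with hF
  have hVc : ContinuousOn V (Set.Icc t0 (t0 + T)) :=
    fun t ht => (hderiv t ht).continuousWithinAt
  have hFc : ContinuousOn F (Set.Icc t0 (t0 + T)) := by
    apply ContinuousOn.sub
    apply ContinuousOn.sub
    · exact hVc.mul (by fun_prop)
    · fun_prop
    · fun_prop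
  have hE : ∀ x : ℝ, HasDerivAt (fun t => Real.exp (C * (t - t0)))
      (Real.exp (C * (x - t0)) * C) x := by
    intro x
    have h1 : HasDerivAt (fun t : ℝ => C * (t - t0)) C x := by
      simpa using (((hasDerivAt_id x).sub_const t0).const_mul C)
    exact h1.exp
  have hFd : ∀ x ∈ Set.Ioo t0 (t0 + T), HasDerivAt F
      (V' x * Real.exp (C * (x - t0)) + V x * (Real.exp (C * (x - t0)) * C)
        - M0 * Real.exp (-β * t0) * 1 - (N / C) * (Real.exp (C * (x - t0)) * C)) x := by
    intro x hx
    have hV : HasDerivAt V (V' x) x := by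
      refine (hderiv x (Set.Ioo_subset_Icc_self hx)).hasDerivAt ?_
      exact Icc_mem_nhds hx.1 hx.2
    have h2 : HasDerivAt (fun t : ℝ => M0 * Real.exp (-β * t0) * (t - t0))
        (M0 * Real.exp (-β * t0) * 1) x :=
      ((hasDerivAt_id x).sub_const t0).const_mul _
    exact ((hV.mul (hE x)).sub h2).sub ((hE x).const_mul (N / C))
  have hanti : AntitoneOn F (Set.Icc t0 (t0 + T)) := by
    apply antitoneOn_of_deriv_nonpos (convex_Icc _ _) hFc
    · intro x hx
      rw [interior_Icc] at hx
      exact (hFd x hx).differentiableAt.differentiableWithinAt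
    · intro x hx
      rw [interior_Icc] at hx
      rw [(hFd x hx).deriv]
      have hxI := Set.Ioo_subset_Icc_self hx
      have hi := hineq x hxI
      have hEpos : 0 < Real.exp (C * (x - t0)) := Real.exp_pos _
      have hkey : M0 * Real.exp (-β * x) * Real.exp (C * (x - t0))
          ≤ M0 * Real.exp (-β * t0) := by
        rw [mul_assoc, ← Real.exp_add]
        apply mul_le_mul_of_nonneg_left _ hM0
        apply Real.exp_le_exp.2
        nlinarith [hx.1]
      have hdiv : N / C * (Real.exp (C * (x - t0)) * C) = N * Real.exp (C * (x - t0)) := by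
        field_simp
      rw [hdiv]
      nlinarith [mul_le_mul_of_nonneg_right hi hEpos.le]
  intro t ht
  have hFle : F t ≤ F t0 := hanti (Set.left_mem_Icc.2 (by linarith)) ht ht.1
  simp only [hF, sub_self, mul_zero, Real.exp_zero, mul_one] at hFle
  set E := Real.exp (C * (t - t0)) with hEdef
  have hEpos : 0 < E := Real.exp_pos _
  set A := V t0 + M0 * Real.exp (-β * t0) * T - N / C with hA
  have htT : t - t0 ≤ T := by linarith [ht.2]
  have hMe : 0 ≤ M0 * Real.exp (-β * t0) := by positivity
  have h1 : V t * E ≤ A + N / C * E := by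
    have := mul_le_mul_of_nonneg_left htT hMe
    simp only [hA]
    linarith
  have h2 : V t ≤ (A + N / C * E) / E := (le_div_iff₀ hEpos).2 h1
  have hEneg : Real.exp (-C * (t - t0)) = E⁻¹ := by
    rw [hEdef, ← Real.exp_neg]; ring_nf
  have h3 : (A + N / C * E) / E = A * E⁻¹ + N / C := by
    rw [add_div, mul_div_assoc, div_self hEpos.ne', mul_one, div_eq_mul_inv]
  rw [hEneg]
  linarith [h2, h3.le]
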